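/- Let f_W(x) = W^L relu(W^{L−1} ⋯ relu(W¹ x)) be a zero-bias L-layer ReLU network, and fix an input x and weights W = (W¹,…,W^L) such that every pre-activation coordinate hˡ_i(x) is nonzero for all hidden layers l = 1,…,L−1. Then the map W ↦ f_W(x) is differentiable at W, for each layer l the Euclidean inner product of Wˡ with the partial gradient ∇_{Wˡ} f_W(x) equals f_W(x), and consequently ⟨W, ∇_W f_W(x)⟩ = L · f_W(x). -/

import Mathlib

open Matrix

attribute [local instance] Matrix.frobeniusNormedAddCommGroup Matrix.frobeniusNormedSpace

/-- Pre-activations of a zero-bias fully-connected ReLU network: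
`reluNetPre dims W x l` is `h^{l+1}(x)`, where `h¹(x) = W¹x` and
`hˡ(x) = Wˡ · relu(h^{l−1}(x))`. -/
def reluNetPre (dims : ℕ → ℕ)
    (W : ∀ l : ℕ, Matrix (Fin (dims (l + 1))) (Fin (dims l)) ℝ)
    (x : Fin (dims 0) → ℝ) : (l : ℕ) → Fin (dims (l + 1)) → ℝ
  | 0 => (W 0).mulVec x
  | l + 1 => (W (l + 1)).mulVec fun i => max (reluNetPre dims W x l i) 0

/-- Extend a finitely-indexed collection of weight matrices to all of `ℕ` (by zero). -/
def extendWeights (dims : ℕ → ℕ) (L : ℕ)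
    (W : ∀ l : Fin L, Matrix (Fin (dims (↑l + 1))) (Fin (dims ↑l)) ℝ) :
    ∀ l : ℕ, Matrix (Fin (dims (l + 1))) (Fin (dims l)) ℝ :=
  fun l => if h : l < L then W ⟨l, h⟩ else 0

/-- The (scalar) output `f_W(x) = h^L(x)` of the `L`-layer zero-bias ReLU network, as a
function of all the weight matrices `W = (W¹, …, W^L)`; the output layer has width
`dims L = 1` and we sum over its (single) coordinate. -/
def reluNetOut (dims : ℕ → ℕ) (L : ℕ) (x : Fin (dims 0) → ℝ)
    (W : ∀ l : Fin L, Matrix (Fin (dims (↑l + 1))) (Fin (dims ↑l)) ℝ) : ℝ :=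
  ∑ i, reluNetPre dims (extendWeights dims L W) x (L - 1) i

/-- Linearized network with fixed activation pattern `σ`. -/
def linPre (dims : ℕ → ℕ) (σ : ∀ l : ℕ, Fin (dims (l + 1)) → ℝ)
    (W : ∀ l : ℕ, Matrix (Fin (dims (l + 1))) (Fin (dims l)) ℝ)
    (x : Fin (dims 0) → ℝ) : (l : ℕ) → Fin (dims (l + 1)) → ℝ
  | 0 => (W 0).mulVec x
  | l + 1 => (W (l + 1)).mulVec fun i => σ l i * linPre dims σ W x l i

lemma reluNetPre_congr (dims : ℕ → ℕ)
    (W W' : ∀ l : ℕ, Matrix (Fin (dims (l + 1))) (Fin (dims l)) ℝ)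
    (x : Fin (dims 0) → ℝ) (m : ℕ) (h : ∀ j ≤ m, W j = W' j) :
    reluNetPre dims W x m = reluNetPre dims W' x m := by
  induction m with
  | zero => simp [reluNetPre, h 0 le_rfl]
  | succ m ih =>
      simp only [reluNetPre, h (m+1) le_rfl,
        ih (fun j hj => h j (hj.trans (Nat.le_succ m)))]

lemma reluNetPre_smul (dims : ℕ → ℕ)
    (W W' : ∀ l : ℕ, Matrix (Fin (dims (l + 1))) (Fin (dims l)) ℝ)
    (x : Fin (dims 0) → ℝ) (k : ℕ) (c : ℝ) (hc : 0 ≤ c)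
    (hk : W' k = c • W k) (hne : ∀ j, j ≠ k → W' j = W j) :
    ∀ m, k ≤ m → reluNetPre dims W' x m = c • reluNetPre dims W x m := by
  intro m
  induction m with
  | zero =>
      intro h0
      have hk0 : k = 0 := Nat.le_zero.mp h0
      subst hk0
      simp [reluNetPre, hk, Matrix.smul_mulVec]
  | succ m ih =>
      intro hkm
      rcases Nat.lt_or_ge m.succ k with h | h
      · omega
      rcases Nat.lt_or_ge m k with hmk | hmk
      · -- k = m + 1
        have hkeq : k = m + 1 := by omega
        subst hkeq
        have hpre : reluNetPre dims W' x m = reluNetPre dims W x m :=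
          reluNetPre_congr dims W' W x m (fun j hj => hne j (by omega))
        simp [reluNetPre, hpre, hk, Matrix.smul_mulVec]
      · -- k ≤ m
        have h1 : W' (m + 1) = W (m + 1) := hne _ (by omega)
        have h2 := ih hmk
        simp only [reluNetPre, h1, h2]
        have : (fun i => max ((c • reluNetPre dims W x m) i) 0)
            = c • fun i => max (reluNetPre dims W x m i) 0 := by
          funext i
          simp only [Pi.smul_apply, smul_eq_mul]
          rw [mul_max_of_nonneg _ _ hc, mul_zero]
        rw [this, Matrix.mulVec_smul]

lemma reluNetPre_eq_linPre (dims : ℕ → ℕ) (σ : ∀ l : ℕ, Fin (dims (l + 1)) → ℝ)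
    (W : ∀ l : ℕ, Matrix (Fin (dims (l + 1))) (Fin (dims l)) ℝ)
    (x : Fin (dims 0) → ℝ) (m : ℕ)
    (hσ : ∀ l < m, ∀ i, max (linPre dims σ W x l i) 0 = σ l i * linPre dims σ W x l i) :
    reluNetPre dims W x m = linPre dims σ W x m := by
  induction m with
  | zero => rfl
  | succ m ih =>
      have hm := ih (fun l hl i => hσ l (hl.trans (Nat.lt_succ_self m)) i)
      have hv : (fun i => max (linPre dims σ W x m i) 0)
          = fun i => σ m i * linPre dims σ W x m i := by
        funext i; exact hσ m (Nat.lt_succ_self m) i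
      simp only [reluNetPre, linPre, hm, hv]

lemma entry_differentiable (dims : ℕ → ℕ) (L : ℕ) (l : Fin L)
    (i : Fin (dims (↑l + 1))) (j : Fin (dims ↑l)) :
    Differentiable ℝ
      (fun W : (∀ l : Fin L, Matrix (Fin (dims (↑l + 1))) (Fin (dims ↑l)) ℝ) => W l i j) := by
  let e : (∀ l : Fin L, Matrix (Fin (dims (↑l + 1))) (Fin (dims ↑l)) ℝ) →ₗ[ℝ] ℝ :=
    { toFun := fun W => W l i j, map_add' := fun a b => rfl, map_smul' := fun c a => rfl }
  exact (LinearMap.toContinuousLinearMap e).differentiable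

lemma extend_entry_differentiable (dims : ℕ → ℕ) (L : ℕ) (k : ℕ)
    (i : Fin (dims (k + 1))) (j : Fin (dims k)) :
    Differentiable ℝ
      (fun W : (∀ l : Fin L, Matrix (Fin (dims (↑l + 1))) (Fin (dims ↑l)) ℝ) =>
        extendWeights dims L W k i j) := by
  unfold extendWeights
  by_cases h : k < L
  · simp only [dif_pos h]
    exact entry_differentiable dims L ⟨k, h⟩ i j
  · simp only [dif_neg h]
    exact differentiable_const _

lemma linPre_differentiable (dims : ℕ → ℕ) (L : ℕ) (σ : ∀ l : ℕ, Fin (dims (l + 1)) → ℝ)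
    (x : Fin (dims 0) → ℝ) (m : ℕ) :
    ∀ i, Differentiable ℝ
      (fun W : (∀ l : Fin L, Matrix (Fin (dims (↑l + 1))) (Fin (dims ↑l)) ℝ) =>
        linPre dims σ (extendWeights dims L W) x m i) := by
  induction m with
  | zero =>
      intro i
      simp only [linPre, Matrix.mulVec, dotProduct]
      exact Differentiable.fun_sum fun j _ =>
        (extend_entry_differentiable dims L 0 i j).mul (differentiable_const _)
  | succ m ih =>
      intro i
      simp only [linPre, Matrix.mulVec, dotProduct]
      exact Differentiable.fun_sum fun j _ =>
        (extend_entry_differentiable dims L (m+1) i j).mul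
          ((differentiable_const _).mul (ih j))

/-- **Euler identity / local differentiability of ReLU networks in their parameters.**
If all hidden pre-activation coordinates are nonzero at `(W, x)`, then `W ↦ f_W(x)` is
differentiable at `W`; for each layer `l`, the Hilbert–Schmidt inner product of `Wˡ` with the
partial gradient `∇_{Wˡ} f_W(x)` (i.e. the derivative applied to `Pi.single l (W l)`) equals
`f_W(x)`; consequently the derivative applied to `W` itself equals `L · f_W(x)`. -/
theorem reluNet_euler_identity (dims : ℕ → ℕ) (L : ℕ) (hL : 1 ≤ L) (hout : dims L = 1)
    (x : Fin (dims 0) → ℝ)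
    (W : ∀ l : Fin L, Matrix (Fin (dims (↑l + 1))) (Fin (dims ↑l)) ℝ)
    (hact : ∀ l : ℕ, l + 1 < L → ∀ i, reluNetPre dims (extendWeights dims L W) x l i ≠ 0) :
    ∃ f' : (∀ l : Fin L, Matrix (Fin (dims (↑l + 1))) (Fin (dims ↑l)) ℝ) →L[ℝ] ℝ,
      HasFDerivAt (reluNetOut dims L x) f' W ∧
      (∀ l : Fin L, f' (Pi.single l (W l)) = reluNetOut dims L x W) ∧
      f' W = L * reluNetOut dims L x W := by
  classical
  set σ : ∀ l : ℕ, Fin (dims (l + 1)) → ℝ :=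
    fun l i => if 0 < reluNetPre dims (extendWeights dims L W) x l i then 1 else 0 with hσdef
  set g : (∀ l : Fin L, Matrix (Fin (dims (↑l + 1))) (Fin (dims ↑l)) ℝ) → ℝ :=
    fun W' => ∑ i, linPre dims σ (extendWeights dims L W') x (L - 1) i with hg
  have hgdiff : Differentiable ℝ g :=
    Differentiable.fun_sum fun i _ => linPre_differentiable dims L σ x (L - 1) i
  -- activation pattern is realized at the base point
  have hbase : ∀ m, m + 1 < L → ∀ i,
      max (linPre dims σ (extendWeights dims L W) x m i) 0
        = σ m i * linPre dims σ (extendWeights dims L W) x m i := by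
    intro m
    induction m using Nat.strong_induction_on with
    | _ m ih =>
      intro hm i
      have hpl : reluNetPre dims (extendWeights dims L W) x m
          = linPre dims σ (extendWeights dims L W) x m :=
        reluNetPre_eq_linPre _ _ _ _ _ (fun l hl j => ih l hl (by omega) j)
      rw [← hpl]
      have hne := hact m hm i
      rcases lt_or_gt_of_ne hne with h | h
      · rw [max_eq_right h.le, hσdef]
        simp [not_lt.mpr h.le]
      · rw [max_eq_left h.le, hσdef]
        simp [h]
  have htop : ∀ m, m ≤ L - 1 → reluNetPre dims (extendWeights dims L W) x m
      = linPre dims σ (extendWeights dims L W) x m := by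
    intro m hm
    exact reluNetPre_eq_linPre _ _ _ _ _ (fun l hl j => hbase l (by omega) j)
  -- sign condition persists in a neighborhood
  have hEsign : ∀ᶠ W' in nhds W, ∀ l : Fin (L - 1), ∀ i,
      0 < linPre dims σ (extendWeights dims L W') x ↑l i
        * reluNetPre dims (extendWeights dims L W) x ↑l i := by
    rw [Filter.eventually_all]
    intro l
    rw [Filter.eventually_all]
    intro i
    have hcont : Continuous fun W' : (∀ l : Fin L, Matrix (Fin (dims (↑l + 1))) (Fin (dims ↑l)) ℝ) =>
        linPre dims σ (extendWeights dims L W') x ↑l i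
          * reluNetPre dims (extendWeights dims L W) x ↑l i :=
      ((linPre_differentiable dims L σ x ↑l i).continuous).mul continuous_const
    have hl1 : (↑l : ℕ) + 1 < L := by have := l.isLt; omega
    have hpos : 0 < linPre dims σ (extendWeights dims L W) x ↑l i
        * reluNetPre dims (extendWeights dims L W) x ↑l i := by
      rw [← htop ↑l (by omega)]
      exact mul_self_pos.mpr (hact ↑l hl1 i)
    exact hcont.continuousAt.eventually (eventually_gt_nhds hpos)
  -- the network locally agrees with the linear model
  have hEq : reluNetOut dims L x =ᶠ[nhds W] g := by
    filter_upwards [hEsign] with W' hW'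
    have hσ' : ∀ l, l < L - 1 → ∀ i,
        max (linPre dims σ (extendWeights dims L W') x l i) 0
          = σ l i * linPre dims σ (extendWeights dims L W') x l i := by
      intro l hl i
      have hs := hW' ⟨l, hl⟩ i
      have hne0 := hact l (by omega) i
      rcases lt_or_gt_of_ne hne0 with h | h
      · have hlt : linPre dims σ (extendWeights dims L W') x l i < 0 := by nlinarith
        rw [max_eq_right hlt.le, hσdef]
        simp [not_lt.mpr h.le]
      · have hgt : 0 < linPre dims σ (extendWeights dims L W') x l i := by nlinarith
        rw [max_eq_left hgt.le, hσdef]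
        simp [h]
    simp only [reluNetOut, hg]
    exact Finset.sum_congr rfl fun i _ => by
      rw [reluNetPre_eq_linPre _ _ _ _ _ (fun l hl j => hσ' l (by omega) j)]
  have hfd : HasFDerivAt (reluNetOut dims L x) (fderiv ℝ g W) W :=
    ((hgdiff W).hasFDerivAt).congr_of_eventuallyEq hEq
  have heach : ∀ l : Fin L, fderiv ℝ g W (Pi.single l (W l)) = reluNetOut dims L x W := by
    intro l
    set v : ∀ l : Fin L, Matrix (Fin (dims (↑l + 1))) (Fin (dims ↑l)) ℝ :=
      Pi.single l (W l) with hv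
    have hcurve : HasDerivAt (fun t : ℝ => W + t • v) v 0 := by
      have := ((hasDerivAt_id (0 : ℝ)).smul_const v).const_add W; simp only [one_smul, id] at this; exact this
    have h0 : HasFDerivAt (reluNetOut dims L x) (fderiv ℝ g W) (W + (0 : ℝ) • v) := by
      simpa using hfd
    have hcomp : HasDerivAt (fun t : ℝ => reluNetOut dims L x (W + t • v))
        (fderiv ℝ g W v) 0 := by
      exact h0.comp_hasDerivAt 0 hcurve
    have hscale : ∀ t : ℝ, -1 < t →
        reluNetOut dims L x (W + t • v) = (1 + t) * reluNetOut dims L x W := by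
      intro t ht
      have hc : (0 : ℝ) ≤ 1 + t := by linarith
      have hk : extendWeights dims L (W + t • v) ↑l
          = (1 + t) • extendWeights dims L W ↑l := by
        simp only [extendWeights, dif_pos l.isLt]
        show (W + t • v) l = (1 + t) • W l
        simp only [hv, Pi.add_apply, Pi.smul_apply, Pi.single_eq_same]
        rw [add_smul, one_smul]
      have hne : ∀ j, j ≠ ↑l →
          extendWeights dims L (W + t • v) j = extendWeights dims L W j := by
        intro j hj
        unfold extendWeights
        by_cases h : j < L
        · simp only [dif_pos h]
          have hne' : (⟨j, h⟩ : Fin L) ≠ l := by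
            intro hee
            exact hj (by rw [← hee])
          simp [hv, Pi.single_eq_of_ne hne']
        · simp [dif_neg h]
      have hsm := reluNetPre_smul dims (extendWeights dims L W)
        (extendWeights dims L (W + t • v)) x ↑l (1 + t) hc hk hne (L - 1)
        (by have := l.isLt; omega)
      simp only [reluNetOut, hsm, Pi.smul_apply, smul_eq_mul]
      rw [← Finset.mul_sum]
    have hψ : HasDerivAt (fun t : ℝ => (1 + t) * reluNetOut dims L x W)
        (reluNetOut dims L x W) 0 := by
      simpa using ((hasDerivAt_id (0 : ℝ)).const_add 1).mul_const (reluNetOut dims L x W)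
    have hEq2 : (fun t : ℝ => reluNetOut dims L x (W + t • v))
        =ᶠ[nhds (0 : ℝ)] fun t => (1 + t) * reluNetOut dims L x W := by
      filter_upwards [eventually_gt_nhds (show (-1 : ℝ) < 0 by norm_num)] with t ht
      exact hscale t ht
    exact (hcomp.congr_of_eventuallyEq hEq2.symm).unique hψ
  refine ⟨fderiv ℝ g W, hfd, heach, ?_⟩
  have hsum : W = ∑ l : Fin L, Pi.single l (W l) := (Finset.univ_sum_single W).symm
  calc (fderiv ℝ g W) W = ∑ l : Fin L, (fderiv ℝ g W) (Pi.single l (W l)) := by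
        have h1 : (fderiv ℝ g W) (∑ l : Fin L, Pi.single l (W l))
            = ∑ l : Fin L, (fderiv ℝ g W) (Pi.single l (W l)) := map_sum _ _ _
        rw [Finset.univ_sum_single] at h1
        exact h1
    _ = ∑ _l : Fin L, reluNetOut dims L x W := Finset.sum_congr rfl fun l _ => heach l
    _ = L * reluNetOut dims L x W := by
        simp [Finset.sum_const, nsmul_eq_mul]
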